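/- For a Poisson algebra (A, {·,·}), the pair (A, D_A) with the bracket [a du, b dv] = a{u,b}dv + b{a,v}du + ab d{u,v} and the anchor π♯ : D_A → Der(A) determined by π♯(du)(v) = {u,v} forms a Lie-Rinehart algebra: namely [α, aβ] = π♯(α)(a)β + a[α,β] and π♯(aα) = a·π♯(α) for all a ∈ A, α, β ∈ D_A. -/

import Mathlib

/-- A Poisson bracket on a commutative ℝ-algebra `A`: an ℝ-bilinear Lie bracket
which is a derivation in each argument. -/
def IsPoissonBracket {A : Type*} [CommRing A] [Algebra ℝ A] (P : A → A → A) : Prop :=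
  (∀ a b c : A, P (a + b) c = P a c + P b c) ∧
  (∀ a b c : A, P a (b + c) = P a b + P a c) ∧
  (∀ (r : ℝ) (a b : A), P (r • a) b = r • P a b) ∧
  (∀ a : A, P a a = 0) ∧
  (∀ a b c : A, P a (P b c) + P b (P c a) + P c (P a b) = 0) ∧
  (∀ a b c : A, P a (b * c) = P a b * c + b * P a c)

namespace PKaux
open KaehlerDifferential Finsupp

variable {A : Type*} [CommRing A] [Algebra ℝ A] {P : A → A → A}

section scalar
variable (hP : IsPoissonBracket P)
include hP

lemma addl (a b c : A) : P (a + b) c = P a c + P b c := hP.1 a b c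
lemma addr (a b c : A) : P a (b + c) = P a b + P a c := hP.2.1 a b c
lemma anti (a b : A) : P a b = - P b a := by
  have h := hP.2.2.2.1 (a + b)
  rw [hP.1, hP.2.1, hP.2.1, hP.2.2.2.1 a, hP.2.2.2.1 b] at h
  linear_combination (norm := abel) h
lemma leibr (a b c : A) : P a (b * c) = P a b * c + b * P a c := hP.2.2.2.2.2 a b c
lemma leibl (a b c : A) : P (a * b) c = P a c * b + a * P b c := by
  rw [anti hP, hP.2.2.2.2.2, anti hP c a, anti hP c b]; ring
lemma jac (a b c : A) : P a (P b c) + P b (P c a) + P c (P a b) = 0 := hP.2.2.2.2.1 a b c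
lemma oner (a : A) : P a 1 = 0 := by
  have := hP.2.2.2.2.2 a 1 1
  rw [mul_one, one_mul, mul_one] at this
  linear_combination -this
lemma onel (a : A) : P 1 a = 0 := by rw [anti hP, oner hP, neg_zero]
lemma zeror (a : A) : P a 0 = 0 := by
  have := hP.2.1 a 0 0; rw [add_zero] at this; linear_combination -this
lemma zerol (a : A) : P 0 a = 0 := by rw [anti hP, zeror hP, neg_zero]
lemma negr (a b : A) : P a (-b) = - P a b := by
  have := hP.2.1 a b (-b); rw [add_neg_cancel, zeror hP] at this
  linear_combination -this
lemma negl (a b : A) : P (-a) b = - P a b := by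
  rw [anti hP, negr hP, anti hP b a]; ring
lemma smull (r : ℝ) (a b : A) : P (r • a) b = r • P a b := hP.2.2.1 r a b
lemma smulr (r : ℝ) (a b : A) : P a (r • b) = r • P a b := by
  rw [anti hP, smull hP, anti hP b a, smul_neg, neg_neg]
lemma algr (a : A) (r : ℝ) : P a (algebraMap ℝ A r) = 0 := by
  rw [Algebra.algebraMap_eq_smul_one, smulr hP, oner hP, smul_zero]
lemma algl (a : A) (r : ℝ) : P (algebraMap ℝ A r) a = 0 := by
  rw [anti hP, algr hP, neg_zero]
lemma subr (a b c : A) : P a (b - c) = P a b - P a c := by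
  rw [sub_eq_add_neg, addr hP, negr hP]; ring
end scalar


section construction
variable (P) (hP : IsPoissonBracket P)

/-- `u ↦ P u ·` as a derivation into `A →ₗ[ℝ] A`. -/
noncomputable def Pder : Derivation ℝ A (A →ₗ[ℝ] A) where
  toFun u :=
    { toFun := fun b => P u b
      map_add' := fun b c => addr hP u b c
      map_smul' := fun r b => smulr hP r u b }
  map_add' u u' := by ext b; exact addl hP u u' b
  map_smul' r u := by ext b; exact smull hP r u b
  map_one_eq_zero' := by ext b; exact onel hP b
  leibniz' a b := by
    ext c
    simp only [LinearMap.coe_mk, AddHom.coe_mk, LinearMap.add_apply, LinearMap.smul_apply,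
      smul_eq_mul]
    rw [leibl hP]; ring

noncomputable def rho : Ω[A⁄ℝ] →ₗ[A] (A →ₗ[ℝ] A) :=
  (Pder P hP).liftKaehlerDifferential

lemma rho_D (u v : A) : rho P hP (D ℝ A u) v = P u v := by
  rw [rho, Derivation.liftKaehlerDifferential_comp_D]; rfl

/-- the generator-level bracket value `[a du, b dv]`. -/
noncomputable def eW (u a v b : A) : Ω[A⁄ℝ] :=
  (a * P u b) • D ℝ A v + (b * P a v) • D ℝ A u + (a * b) • D ℝ A (P u v)

noncomputable def inner1 (u a v : A) : A →ₗ[ℝ] Ω[A⁄ℝ] where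
  toFun b := eW P u a v b
  map_add' b b' := by
    simp only [eW, addr hP]
    module
  map_smul' r b := by
    simp only [eW, smulr hP, RingHom.id_apply]
    simp only [Algebra.smul_def]
    module

include hP in
lemma eW_zero_r (u a v : A) : eW P u a v 0 = 0 := by
  simp [eW, zeror hP]

include hP in
lemma eW_zero_l (u v b : A) : eW P u 0 v b = 0 := by
  simp [eW, zerol hP]

noncomputable def mid (u a : A) : (A →₀ A) →ₗ[ℝ] Ω[A⁄ℝ] :=
  Finsupp.lsum ℝ (fun v => inner1 P hP u a v)

include hP in
@[simp] lemma mid_single (u a v b : A) :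
    mid P hP u a (Finsupp.single v b) = eW P u a v b := by
  rw [mid, Finsupp.lsum_single]
  rfl

noncomputable def Bt : (A →₀ A) →ₗ[ℝ] (A →₀ A) →ₗ[ℝ] Ω[A⁄ℝ] :=
  Finsupp.lsum ℝ (fun u =>
    { toFun := fun a => mid P hP u a
      map_add' := fun a a' => by
        apply Finsupp.lhom_ext
        intro v b
        simp only [mid_single, LinearMap.add_apply, eW, addl hP]
        module
      map_smul' := fun r a => by
        apply Finsupp.lhom_ext
        intro v b
        simp only [mid_single, LinearMap.smul_apply, RingHom.id_apply, eW, smull hP]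
        simp only [Algebra.smul_def]
        module })

include hP in
@[simp] lemma Bt_single (u a v b : A) :
    Bt P hP (Finsupp.single u a) (Finsupp.single v b) = eW P u a v b := by
  rw [Bt, Finsupp.lsum_single]
  exact mid_single P hP u a v b

include hP in
lemma Bt_ker_left {x : A →₀ A} (hx : x ∈ KaehlerDifferential.kerTotal ℝ A) :
    ∀ c : A, Bt P hP (c • x) = 0 := by
  refine Submodule.span_induction ?_ ?_ ?_ ?_ hx
  · rintro _ ((⟨⟨x, y⟩, rfl⟩ | ⟨⟨x, y⟩, rfl⟩) | ⟨r, rfl⟩) <;> intro c <;>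
      apply Finsupp.lhom_ext <;> intro v b
    · simp only [smul_sub, smul_add, Finsupp.smul_single, smul_eq_mul, mul_one, map_sub, map_add,
        LinearMap.sub_apply, LinearMap.add_apply, LinearMap.zero_apply, Bt_single]
      simp only [eW, addl hP, map_add]
      module
    · simp only [smul_sub, smul_add, Finsupp.smul_single, smul_eq_mul, mul_one, map_sub, map_add,
        LinearMap.sub_apply, LinearMap.add_apply, LinearMap.zero_apply, Bt_single]
      simp only [eW, leibl hP, map_add, Derivation.leibniz]
      module
    · simp only [Finsupp.smul_single, smul_eq_mul, mul_one, LinearMap.zero_apply, Bt_single]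
      simp [eW, algl hP, Derivation.map_algebraMap]
  · intro c; rw [smul_zero, map_zero]
  · intro x y _ _ hx hy c; rw [smul_add, map_add, hx, hy, add_zero]
  · intro a x _ hx c; rw [smul_smul]; exact hx (c * a)

include hP in
lemma Bt_ker_right {y : A →₀ A} (hy : y ∈ KaehlerDifferential.kerTotal ℝ A) :
    ∀ c : A, (Bt P hP).flip (c • y) = 0 := by
  refine Submodule.span_induction ?_ ?_ ?_ ?_ hy
  · rintro _ ((⟨⟨x, y⟩, rfl⟩ | ⟨⟨x, y⟩, rfl⟩) | ⟨r, rfl⟩) <;> intro c <;>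
      apply Finsupp.lhom_ext <;> intro u a
    · simp only [smul_sub, smul_add, Finsupp.smul_single, smul_eq_mul, mul_one, map_sub, map_add,
        LinearMap.sub_apply, LinearMap.add_apply, LinearMap.zero_apply, LinearMap.flip_apply,
        Bt_single]
      simp only [eW, addr hP, map_add]
      module
    · simp only [smul_sub, smul_add, Finsupp.smul_single, smul_eq_mul, mul_one, map_sub, map_add,
        LinearMap.sub_apply, LinearMap.add_apply, LinearMap.zero_apply, LinearMap.flip_apply,
        Bt_single]
      simp only [eW, leibr hP, map_add, Derivation.leibniz]
      module
    · simp only [Finsupp.smul_single, smul_eq_mul, mul_one, LinearMap.zero_apply,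
        LinearMap.flip_apply, Bt_single]
      simp [eW, algr hP, Derivation.map_algebraMap]
  · intro c; rw [smul_zero, map_zero]
  · intro x y _ _ hx hy c; rw [smul_add, map_add, hx, hy, add_zero]
  · intro a x _ hx c; rw [smul_smul]; exact hx (c * a)

/-- the canonical surjection `(A →₀ A) → Ω`. -/
noncomputable def lc : (A →₀ A) →ₗ[A] Ω[A⁄ℝ] :=
  Finsupp.linearCombination A ⇑(D ℝ A)

include hP in
lemma Bt_wd {x x' y y' : A →₀ A} (h1 : lc (A := A) x = lc x') (h2 : lc (A := A) y = lc y') :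
    Bt P hP x y = Bt P hP x' y' := by
  have hx : x - x' ∈ KaehlerDifferential.kerTotal ℝ A := by
    rw [← KaehlerDifferential.kerTotal_eq, LinearMap.mem_ker, map_sub, sub_eq_zero]
    exact h1
  have hy : y - y' ∈ KaehlerDifferential.kerTotal ℝ A := by
    rw [← KaehlerDifferential.kerTotal_eq, LinearMap.mem_ker, map_sub, sub_eq_zero]
    exact h2
  have e1 : Bt P hP x y = Bt P hP x' y := by
    have := congrFun (congrArg DFunLike.coe (Bt_ker_left P hP hx 1)) y
    rw [one_smul, map_sub] at this
    simpa [sub_eq_zero] using this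
  have e2 : Bt P hP x' y = Bt P hP x' y' := by
    have := congrFun (congrArg DFunLike.coe (Bt_ker_right P hP hy 1)) x'
    rw [one_smul, map_sub] at this
    simp only [LinearMap.sub_apply, LinearMap.flip_apply, LinearMap.zero_apply,
      sub_eq_zero] at this
    exact this
  rw [e1, e2]

/-- a choice of preimage under `lc`. -/
noncomputable def pre (ω : Ω[A⁄ℝ]) : A →₀ A :=
  (KaehlerDifferential.linearCombination_surjective ℝ A ω).choose

@[simp] lemma lc_pre (ω : Ω[A⁄ℝ]) : lc (A := A) (pre ω) = ω :=
  (KaehlerDifferential.linearCombination_surjective ℝ A ω).choose_spec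

/-- The Poisson bracket on Kähler differentials. -/
noncomputable def B (α β : Ω[A⁄ℝ]) : Ω[A⁄ℝ] := Bt P hP (pre α) (pre β)

include hP in
lemma B_eq {x y : A →₀ A} {α β : Ω[A⁄ℝ]} (h1 : lc (A := A) x = α) (h2 : lc (A := A) y = β) :
    B P hP α β = Bt P hP x y := by
  refine Bt_wd P hP ?_ ?_ <;> simp [h1, h2]

lemma lc_single (u a : A) : lc (A := A) (Finsupp.single u a) = a • D ℝ A u := by
  simp [lc, Finsupp.linearCombination_single]

include hP in
lemma B_add_left (α β γ : Ω[A⁄ℝ]) : B P hP (α + β) γ = B P hP α γ + B P hP β γ := by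
  rw [B_eq P hP (x := pre α + pre β) (y := pre γ) (by simp) (lc_pre γ), map_add,
    LinearMap.add_apply]
  rfl

include hP in
lemma B_add_right (α β γ : Ω[A⁄ℝ]) : B P hP α (β + γ) = B P hP α β + B P hP α γ := by
  rw [B_eq P hP (x := pre α) (y := pre β + pre γ) (lc_pre α) (by simp), map_add]
  rfl

include hP in
lemma B_gen (a b u v : A) :
    B P hP (a • D ℝ A u) (b • D ℝ A v) = eW P u a v b := by
  rw [B_eq P hP (x := Finsupp.single u a) (y := Finsupp.single v b) (lc_single u a)
    (lc_single v b), Bt_single]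

include hP in
lemma Bt_antisym (x y : A →₀ A) : Bt P hP x y + Bt P hP y x = 0 := by
  have key : Bt P hP + (Bt P hP).flip = 0 := by
    apply Finsupp.lhom_ext
    intro u a
    apply Finsupp.lhom_ext
    intro v b
    simp only [LinearMap.add_apply, LinearMap.flip_apply, LinearMap.zero_apply, Bt_single]
    simp only [eW, anti hP v a, anti hP b u, anti hP v u, map_neg]
    module
  have := congrFun (congrArg DFunLike.coe (congrFun (congrArg DFunLike.coe key) x)) y
  simpa using this

include hP in
lemma B_antisym (α β : Ω[A⁄ℝ]) : B P hP α β = - B P hP β α := by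
  have := Bt_antisym P hP (pre α) (pre β)
  rw [B, B]
  linear_combination (norm := abel) this

include hP in
lemma B_leibniz (a : A) (α β : Ω[A⁄ℝ]) :
    B P hP α (a • β) = (rho P hP α) a • β + a • B P hP α β := by
  have claim : ∀ x y : A →₀ A,
      Bt P hP x (a • y) = (rho P hP (lc (A := A) x)) a • lc (A := A) y + a • Bt P hP x y := by
    intro x y
    induction x using Finsupp.induction_linear with
    | zero => simp
    | add x₁ x₂ ih₁ ih₂ =>
      simp only [map_add, LinearMap.add_apply, add_smul, smul_add, ih₁, ih₂]
      abel
    | single u cc =>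
      induction y using Finsupp.induction_linear with
      | zero => simp
      | add y₁ y₂ ih₁ ih₂ =>
        simp only [smul_add, map_add, ih₁, ih₂]
        abel
      | single v d =>
        rw [Finsupp.smul_single, Bt_single, Bt_single, lc_single, lc_single]
        rw [map_smul]
        simp only [LinearMap.smul_apply, smul_eq_mul, rho_D]
        simp only [eW, smul_eq_mul, leibr hP]
        module
  have h := claim (pre α) (pre β)
  rw [lc_pre, lc_pre] at h
  calc B P hP α (a • β) = Bt P hP (pre α) (a • pre β) := by
        refine B_eq P hP (lc_pre α) ?_
        rw [map_smul, lc_pre]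
      _ = (rho P hP α) a • β + a • B P hP α β := h

include hP in
lemma Bt_pre (x : A →₀ A) {w : A →₀ A} {ω : Ω[A⁄ℝ]} (h : lc (A := A) w = ω) :
    Bt P hP x (pre ω) = Bt P hP x w :=
  Bt_wd P hP rfl (by rw [lc_pre, h])

include hP in
lemma jacobi_single (u a v b t c : A) :
    Bt P hP (Finsupp.single u a) (pre (Bt P hP (Finsupp.single v b) (Finsupp.single t c))) +
    Bt P hP (Finsupp.single v b) (pre (Bt P hP (Finsupp.single t c) (Finsupp.single u a))) +
    Bt P hP (Finsupp.single t c) (pre (Bt P hP (Finsupp.single u a) (Finsupp.single v b))) = 0 := by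
  have w1 : lc (A := A) (Finsupp.single t (b * P v c) + Finsupp.single v (c * P b t) +
      Finsupp.single (P v t) (b * c)) = Bt P hP (Finsupp.single v b) (Finsupp.single t c) := by
    rw [Bt_single]
    simp only [map_add, lc_single, eW]
  have w2 : lc (A := A) (Finsupp.single u (c * P t a) + Finsupp.single t (a * P c u) +
      Finsupp.single (P t u) (c * a)) = Bt P hP (Finsupp.single t c) (Finsupp.single u a) := by
    rw [Bt_single]
    simp only [map_add, lc_single, eW]
  have w3 : lc (A := A) (Finsupp.single v (a * P u b) + Finsupp.single u (b * P a v) +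
      Finsupp.single (P u v) (a * b)) = Bt P hP (Finsupp.single u a) (Finsupp.single v b) := by
    rw [Bt_single]
    simp only [map_add, lc_single, eW]
  rw [Bt_pre P hP _ w1, Bt_pre P hP _ w2, Bt_pre P hP _ w3]
  simp only [map_add, Bt_single]
  have hJ1 : P c (P u v) = P v (P u c) - P u (P v c) := by
    have h := jac hP u v c
    rw [anti hP c u, negr hP] at h
    linear_combination h
  have hJ2 : P t (P u b) = P b (P u t) - P u (P b t) := by
    have h := jac hP u b t
    rw [anti hP t u, negr hP] at h
    linear_combination h
  have hJ3 : P t (P a v) = P v (P a t) - P a (P v t) := by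
    have h := jac hP a v t
    rw [anti hP t a, negr hP] at h
    linear_combination h
  have hJ4 : P t (P u v) = P v (P u t) - P u (P v t) := by
    have h := jac hP u v t
    rw [anti hP t u, negr hP] at h
    linear_combination h
  simp only [eW, leibr hP]
  simp only [anti hP t a, anti hP b u, anti hP v a, anti hP c u, anti hP t b, anti hP c v,
    anti hP v u, anti hP t v, anti hP t u]
  simp only [negr hP, map_neg]
  simp only [hJ1, hJ2, hJ3, hJ4, map_sub]
  module

include hP in
lemma Bt_jacobi (x y z : A →₀ A) :
    Bt P hP x (pre (Bt P hP y z)) + Bt P hP y (pre (Bt P hP z x)) +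
      Bt P hP z (pre (Bt P hP x y)) = 0 := by
  induction x using Finsupp.induction_linear with
  | zero =>
    simp only [map_zero, LinearMap.zero_apply]
    rw [Bt_pre P hP y (w := 0) (by simp), Bt_pre P hP z (w := 0) (by simp)]
    simp
  | add x₁ x₂ ih₁ ih₂ =>
    have e2 : Bt P hP y (pre (Bt P hP z (x₁ + x₂))) =
        Bt P hP y (pre (Bt P hP z x₁)) + Bt P hP y (pre (Bt P hP z x₂)) := by
      rw [Bt_pre P hP y (w := pre (Bt P hP z x₁) + pre (Bt P hP z x₂)) (by simp), map_add]
    have e3 : Bt P hP z (pre (Bt P hP (x₁ + x₂) y)) =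
        Bt P hP z (pre (Bt P hP x₁ y)) + Bt P hP z (pre (Bt P hP x₂ y)) := by
      rw [Bt_pre P hP z (w := pre (Bt P hP x₁ y) + pre (Bt P hP x₂ y)) (by simp), map_add]
    rw [e2, e3, map_add, LinearMap.add_apply]
    rw [show Bt P hP x₁ (pre (Bt P hP y z)) + Bt P hP x₂ (pre (Bt P hP y z)) +
        (Bt P hP y (pre (Bt P hP z x₁)) + Bt P hP y (pre (Bt P hP z x₂))) +
        (Bt P hP z (pre (Bt P hP x₁ y)) + Bt P hP z (pre (Bt P hP x₂ y))) =
        (Bt P hP x₁ (pre (Bt P hP y z)) + Bt P hP y (pre (Bt P hP z x₁)) +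
          Bt P hP z (pre (Bt P hP x₁ y))) +
        (Bt P hP x₂ (pre (Bt P hP y z)) + Bt P hP y (pre (Bt P hP z x₂)) +
          Bt P hP z (pre (Bt P hP x₂ y))) from by abel, ih₁, ih₂, add_zero]
  | single u a =>
    induction y using Finsupp.induction_linear with
    | zero =>
      simp only [map_zero, LinearMap.zero_apply]
      rw [Bt_pre P hP (Finsupp.single u a) (w := 0) (by simp),
        Bt_pre P hP z (w := 0) (by simp)]
      simp
    | add y₁ y₂ ih₁ ih₂ =>
      have e1 : Bt P hP (Finsupp.single u a) (pre (Bt P hP (y₁ + y₂) z)) =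
          Bt P hP (Finsupp.single u a) (pre (Bt P hP y₁ z)) +
            Bt P hP (Finsupp.single u a) (pre (Bt P hP y₂ z)) := by
        rw [Bt_pre P hP _ (w := pre (Bt P hP y₁ z) + pre (Bt P hP y₂ z)) (by simp), map_add]
      have e3 : Bt P hP z (pre (Bt P hP (Finsupp.single u a) (y₁ + y₂))) =
          Bt P hP z (pre (Bt P hP (Finsupp.single u a) y₁)) +
            Bt P hP z (pre (Bt P hP (Finsupp.single u a) y₂)) := by
        rw [Bt_pre P hP z (w := pre (Bt P hP (Finsupp.single u a) y₁) +
          pre (Bt P hP (Finsupp.single u a) y₂)) (by simp), map_add]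
      rw [e1, e3, map_add, LinearMap.add_apply]
      rw [show Bt P hP (Finsupp.single u a) (pre (Bt P hP y₁ z)) +
          Bt P hP (Finsupp.single u a) (pre (Bt P hP y₂ z)) +
          (Bt P hP y₁ (pre (Bt P hP z (Finsupp.single u a))) +
            Bt P hP y₂ (pre (Bt P hP z (Finsupp.single u a)))) +
          (Bt P hP z (pre (Bt P hP (Finsupp.single u a) y₁)) +
            Bt P hP z (pre (Bt P hP (Finsupp.single u a) y₂))) =
          (Bt P hP (Finsupp.single u a) (pre (Bt P hP y₁ z)) +
            Bt P hP y₁ (pre (Bt P hP z (Finsupp.single u a))) +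
            Bt P hP z (pre (Bt P hP (Finsupp.single u a) y₁))) +
          (Bt P hP (Finsupp.single u a) (pre (Bt P hP y₂ z)) +
            Bt P hP y₂ (pre (Bt P hP z (Finsupp.single u a))) +
            Bt P hP z (pre (Bt P hP (Finsupp.single u a) y₂))) from by abel, ih₁, ih₂, add_zero]
    | single v b =>
      induction z using Finsupp.induction_linear with
      | zero =>
        simp only [map_zero, LinearMap.zero_apply]
        rw [Bt_pre P hP (Finsupp.single u a) (w := 0) (by simp),
          Bt_pre P hP (Finsupp.single v b) (w := 0) (by simp)]
        simp
      | add z₁ z₂ ih₁ ih₂ =>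
        have e1 : Bt P hP (Finsupp.single u a) (pre (Bt P hP (Finsupp.single v b) (z₁ + z₂))) =
            Bt P hP (Finsupp.single u a) (pre (Bt P hP (Finsupp.single v b) z₁)) +
              Bt P hP (Finsupp.single u a) (pre (Bt P hP (Finsupp.single v b) z₂)) := by
          rw [Bt_pre P hP _ (w := pre (Bt P hP (Finsupp.single v b) z₁) +
            pre (Bt P hP (Finsupp.single v b) z₂)) (by simp), map_add]
        have e2 : Bt P hP (Finsupp.single v b) (pre (Bt P hP (z₁ + z₂) (Finsupp.single u a))) =
            Bt P hP (Finsupp.single v b) (pre (Bt P hP z₁ (Finsupp.single u a))) +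
              Bt P hP (Finsupp.single v b) (pre (Bt P hP z₂ (Finsupp.single u a))) := by
          rw [Bt_pre P hP _ (w := pre (Bt P hP z₁ (Finsupp.single u a)) +
            pre (Bt P hP z₂ (Finsupp.single u a))) (by simp), map_add]
        rw [e1, e2, map_add, LinearMap.add_apply]
        rw [show Bt P hP (Finsupp.single u a) (pre (Bt P hP (Finsupp.single v b) z₁)) +
            Bt P hP (Finsupp.single u a) (pre (Bt P hP (Finsupp.single v b) z₂)) +
            (Bt P hP (Finsupp.single v b) (pre (Bt P hP z₁ (Finsupp.single u a))) +
              Bt P hP (Finsupp.single v b) (pre (Bt P hP z₂ (Finsupp.single u a)))) +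
            (Bt P hP z₁ (pre (Bt P hP (Finsupp.single u a) (Finsupp.single v b))) +
              Bt P hP z₂ (pre (Bt P hP (Finsupp.single u a) (Finsupp.single v b)))) =
            (Bt P hP (Finsupp.single u a) (pre (Bt P hP (Finsupp.single v b) z₁)) +
              Bt P hP (Finsupp.single v b) (pre (Bt P hP z₁ (Finsupp.single u a))) +
              Bt P hP z₁ (pre (Bt P hP (Finsupp.single u a) (Finsupp.single v b)))) +
            (Bt P hP (Finsupp.single u a) (pre (Bt P hP (Finsupp.single v b) z₂)) +
              Bt P hP (Finsupp.single v b) (pre (Bt P hP z₂ (Finsupp.single u a))) +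
              Bt P hP z₂ (pre (Bt P hP (Finsupp.single u a) (Finsupp.single v b)))) from by abel,
          ih₁, ih₂, add_zero]
      | single t c => exact jacobi_single P hP u a v b t c

include hP in
lemma B_jacobi (α β γ : Ω[A⁄ℝ]) :
    B P hP α (B P hP β γ) + B P hP β (B P hP γ α) + B P hP γ (B P hP α β) = 0 := by
  have h := Bt_jacobi P hP (pre α) (pre β) (pre γ)
  rw [B, B, B, B, B, B]
  exact h

include hP in
lemma rho_mul (α : Ω[A⁄ℝ]) (a b : A) :
    rho P hP α (a * b) = rho P hP α a * b + a * rho P hP α b := by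
  have hmem : α ∈ Submodule.span A (Set.range ⇑(D ℝ A)) := by
    rw [KaehlerDifferential.span_range_derivation]; trivial
  have H : ∀ a b : A,
      rho P hP α (a * b) = rho P hP α a * b + a * rho P hP α b := by
    refine Submodule.span_induction (p := fun x _ => ∀ a b : A,
      rho P hP x (a * b) = rho P hP x a * b + a * rho P hP x b) ?_ ?_ ?_ ?_ hmem
    · rintro _ ⟨u, rfl⟩ a b
      rw [rho_D, rho_D, rho_D]
      exact leibr hP u a b
    · intro a b; simp
    · intro x y _ _ hx hy a b
      simp only [map_add, LinearMap.add_apply, hx, hy]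
      ring
    · intro cc x _ hx a b
      simp only [map_smul, LinearMap.smul_apply, smul_eq_mul, hx]
      ring
  exact H a b

end construction
end PKaux

open KaehlerDifferential in
/-- For a Poisson algebra `(A, {·,·})`, the bracket
`[a du, b dv] = a{u,b} dv + b{a,v} du + ab d{u,v}` on the Kähler differentials
`D_A = Ω[A⁄ℝ]`, together with the `A`-linear anchor `π♯ : D_A → Der(A)`
determined by `π♯(du)(v) = {u,v}`, turns `(A, D_A)` into a Lie–Rinehart algebra:
`[α, a β] = π♯(α)(a) • β + a • [α, β]` and `π♯(a α) = a · π♯(α)`. -/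
theorem kaehler_differentials_lie_rinehart {A : Type*} [CommRing A] [Algebra ℝ A]
    (P : A → A → A) (hP : IsPoissonBracket P) :
    ∃ (B : Ω[A⁄ℝ] → Ω[A⁄ℝ] → Ω[A⁄ℝ]) (ρ : Ω[A⁄ℝ] →ₗ[A] (A →ₗ[ℝ] A)),
      -- B is a Lie bracket extending the generator formula
      (∀ α β γ : Ω[A⁄ℝ], B (α + β) γ = B α γ + B β γ) ∧
      (∀ α β γ : Ω[A⁄ℝ], B α (β + γ) = B α β + B α γ) ∧
      (∀ α β : Ω[A⁄ℝ], B α β = - B β α) ∧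
      (∀ α β γ : Ω[A⁄ℝ], B α (B β γ) + B β (B γ α) + B γ (B α β) = 0) ∧
      (∀ a b u v : A,
        B (a • D ℝ A u) (b • D ℝ A v) =
          (a * P u b) • D ℝ A v + (b * P a v) • D ℝ A u +
            (a * b) • D ℝ A (P u v)) ∧
      -- the anchor is determined by π♯(du)(v) = {u,v} and acts by derivations
      (∀ u v : A, ρ (D ℝ A u) v = P u v) ∧
      (∀ (α : Ω[A⁄ℝ]) (a b : A), ρ α (a * b) = ρ α a * b + a * ρ α b) ∧
      -- Lie–Rinehart compatibility: [α, aβ] = π♯(α)(a) β + a [α,β]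
      (∀ (a : A) (α β : Ω[A⁄ℝ]), B α (a • β) = (ρ α a) • β + a • B α β) := by
  refine ⟨PKaux.B P hP, PKaux.rho P hP, ?_, ?_, ?_, ?_, ?_, ?_, ?_, ?_⟩
  · exact PKaux.B_add_left P hP
  · exact PKaux.B_add_right P hP
  · exact PKaux.B_antisym P hP
  · exact PKaux.B_jacobi P hP
  · intro a b u v
    rw [PKaux.B_gen P hP a b u v, PKaux.eW]
  · exact PKaux.rho_D P hP
  · exact PKaux.rho_mul P hP
  · exact PKaux.B_leibniz P hP
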